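/- Let (Ω, 𝓕, π) be a σ-finite measure space and let ν₀, ν₁ be probability measures on (Ω, 𝓕) with densities f₀ = dν₀/dπ, f₁ = dν₁/dπ, such that ν₁ ≪ ν₀. Then C_β := ∫ f₀(x)^{1/(1+β)} f₁(x)^{β/(1+β)} π(dx) converges to ν₁(Ω) = 1 as β → ∞. -/

import Mathlib

open MeasureTheory
open scoped Classical ENNReal

/-- Kullback–Leibler divergence: `D_KL(μ, ν) = ∫ log(dμ/dν) dμ` if `μ ≪ ν` (and the
log-likelihood ratio is integrable), and `∞` otherwise. Valued in `EReal = (-∞, ∞]`. -/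
noncomputable def klDiv {Ω : Type*} [MeasurableSpace Ω] (μ ν : Measure Ω) : EReal :=
  if μ ≪ ν ∧ Integrable (llr μ ν) μ then ((∫ x, llr μ ν x ∂μ : ℝ) : EReal) else ⊤

/-- The normalizing constant `C_β = ∫ f₀^{1/(1+β)} f₁^{β/(1+β)} dπ` of the geometric mixture. -/
noncomputable def geomConst {Ω : Type*} [MeasurableSpace Ω] (π : Measure Ω)
    (f₀ f₁ : Ω → ℝ≥0∞) (β : ℝ) : ℝ≥0∞ :=
  ∫⁻ x, f₀ x ^ (1 / (1 + β)) * f₁ x ^ (β / (1 + β)) ∂π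

/-- The geometric-mixture measure `μ*_β` with `dμ*_β/dπ = C_β⁻¹ f₀^{1/(1+β)} f₁^{β/(1+β)}`. -/
noncomputable def geomMix {Ω : Type*} [MeasurableSpace Ω] (π : Measure Ω)
    (f₀ f₁ : Ω → ℝ≥0∞) (β : ℝ) : Measure Ω :=
  π.withDensity fun x => (geomConst π f₀ f₁ β)⁻¹ * (f₀ x ^ (1 / (1 + β)) * f₁ x ^ (β / (1 + β)))

open Filter in
open scoped Topology in
lemma aux_rpow_mul_le (a b : ℝ≥0∞) {θ : ℝ} (h0 : 0 ≤ θ) (h1 : θ ≤ 1) :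
    a ^ θ * b ^ (1 - θ) ≤ a + b := by
  rcases le_total a b with hab | hab
  · calc a ^ θ * b ^ (1 - θ) ≤ b ^ θ * b ^ (1 - θ) :=
          mul_le_mul_left (ENNReal.rpow_le_rpow hab h0) _
      _ = b ^ (θ + (1 - θ)) := (ENNReal.rpow_add_of_nonneg _ _ h0 (by linarith)).symm
      _ = b := by norm_num
      _ ≤ a + b := le_add_self
  · calc a ^ θ * b ^ (1 - θ) ≤ a ^ θ * a ^ (1 - θ) :=
          mul_le_mul_right (ENNReal.rpow_le_rpow hab (by linarith)) _
      _ = a ^ (θ + (1 - θ)) := (ENNReal.rpow_add_of_nonneg _ _ h0 (by linarith)).symm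
      _ = a := by norm_num
      _ ≤ a + b := le_self_add

open Filter in
open scoped Topology in
lemma aux_tendsto_rpow {a : ℝ≥0∞} (ha : a ≠ 0) (ha' : a ≠ ∞) {l : Filter ℝ} {e : ℝ → ℝ}
    {L : ℝ} (he : Tendsto e l (𝓝 L)) : Tendsto (fun β => a ^ e β) l (𝓝 (a ^ L)) := by
  have hpos : 0 < a.toReal := ENNReal.toReal_pos ha ha'
  have key : ∀ y : ℝ, a ^ y = ENNReal.ofReal (Real.exp (Real.log a.toReal * y)) := by
    intro y
    conv_lhs => rw [← ENNReal.ofReal_toReal ha']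
    rw [ENNReal.ofReal_rpow_of_pos hpos, Real.rpow_def_of_pos hpos]
  simp_rw [key]
  exact (ENNReal.continuous_ofReal.tendsto _).comp
    ((Real.continuous_exp.tendsto _).comp (he.const_mul _))

open Filter
open scoped Topology

theorem stmt4 {Ω : Type*} [MeasurableSpace Ω] (π ν₀ ν₁ : Measure Ω) [SigmaFinite π]
    [IsProbabilityMeasure ν₀] [IsProbabilityMeasure ν₁]
    (f₀ f₁ : Ω → ℝ≥0∞) (hf₀ : Measurable f₀) (hf₁ : Measurable f₁)
    (hν₀ : ν₀ = π.withDensity f₀) (hν₁ : ν₁ = π.withDensity f₁)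
    (h01 : ν₁ ≪ ν₀) :
    ν₁ Set.univ = 1 ∧
    Filter.Tendsto (fun β : ℝ => geomConst π f₀ f₁ β) Filter.atTop (nhds (ν₁ Set.univ)) := by
  have huniv1 : ν₁ Set.univ = ∫⁻ x, f₁ x ∂π := by
    rw [hν₁, withDensity_apply _ MeasurableSet.univ, Measure.restrict_univ]
  have huniv0 : ν₀ Set.univ = ∫⁻ x, f₀ x ∂π := by
    rw [hν₀, withDensity_apply _ MeasurableSet.univ, Measure.restrict_univ]
  have hmass1 : ∫⁻ x, f₁ x ∂π = 1 := by rw [← huniv1, measure_univ]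
  have hmass0 : ∫⁻ x, f₀ x ∂π = 1 := by rw [← huniv0, measure_univ]
  refine ⟨measure_univ, ?_⟩
  rw [huniv1]
  -- a.e. facts
  have hfin0 : ∀ᵐ x ∂π, f₀ x ≠ ∞ :=
    (ae_lt_top hf₀ (by simp [hmass0])).mono fun x h => h.ne
  have hfin1 : ∀ᵐ x ∂π, f₁ x ≠ ∞ :=
    (ae_lt_top hf₁ (by simp [hmass1])).mono fun x h => h.ne
  have habs : ∀ᵐ x ∂π, f₀ x = 0 → f₁ x = 0 := by
    set s : Set Ω := {x | f₀ x = 0} with hs_def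
    have hs : MeasurableSet s := hf₀ (measurableSet_singleton 0)
    have hν₀s : ν₀ s = 0 := by
      rw [hν₀, withDensity_apply _ hs]
      rw [setLIntegral_congr_fun hs (fun x hx => (hx : f₀ x = 0))]
      simp
    have hν₁s : ν₁ s = 0 := h01 hν₀s
    have : ∫⁻ x in s, f₁ x ∂π = 0 := by
      rw [hν₁, withDensity_apply _ hs] at hν₁s; exact hν₁s
    have h0 : f₁ =ᵐ[π.restrict s] 0 := (lintegral_eq_zero_iff hf₁).mp this
    exact (ae_restrict_iff' hs).mp h0
  unfold geomConst
  apply tendsto_lintegral_filter_of_dominated_convergence (fun x => f₀ x + f₁ x)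
  · exact Eventually.of_forall fun β =>
      (ENNReal.continuous_rpow_const.measurable.comp hf₀).mul
        (ENNReal.continuous_rpow_const.measurable.comp hf₁)
  · filter_upwards [eventually_gt_atTop (0 : ℝ)] with β hβ
    refine ae_of_all _ fun x => ?_
    have h1β : (0 : ℝ) < 1 + β := by linarith
    have hrw : β / (1 + β) = 1 - 1 / (1 + β) := by field_simp; ring
    rw [hrw]
    exact aux_rpow_mul_le _ _ (by positivity) (by rw [div_le_one h1β]; linarith)
  · rw [lintegral_add_left hf₀, hmass0, hmass1]
    norm_num
  · filter_upwards [hfin0, hfin1, habs] with x hx0 hx1 hx01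
    have he0 : Tendsto (fun β : ℝ => 1 / (1 + β)) atTop (𝓝 0) := by
      have h : Tendsto (fun β : ℝ => 1 + β) atTop atTop :=
        tendsto_atTop_add_const_left _ _ tendsto_id
      have h2 : Tendsto (fun β : ℝ => (1 + β)⁻¹) atTop (𝓝 0) := h.inv_tendsto_atTop
      simpa only [one_div] using h2
    have he1 : Tendsto (fun β : ℝ => β / (1 + β)) atTop (𝓝 1) := by
      have h := (tendsto_const_nhds (α := ℝ) (x := (1:ℝ)) (f := atTop)).sub he0
      rw [sub_zero] at h
      refine h.congr' ?_
      filter_upwards [eventually_gt_atTop (0 : ℝ)] with β hβ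
      have h1β : (0 : ℝ) < 1 + β := by linarith
      field_simp
      ring
    by_cases hz : f₁ x = 0
    · rw [hz]
      refine Tendsto.congr' ?_ tendsto_const_nhds
      filter_upwards [eventually_gt_atTop (0 : ℝ)] with β hβ
      rw [ENNReal.zero_rpow_of_pos (by positivity), mul_zero]
    · have hnz0 : f₀ x ≠ 0 := fun h => hz (hx01 h)
      have t0 := aux_tendsto_rpow hnz0 hx0 he0
      have t1 := aux_tendsto_rpow hz hx1 he1
      have := ENNReal.Tendsto.mul t0 (by simp) t1 (by simp [hx1])
      simpa using this
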